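/- arXiv:1412.6353 — 2 statements merged into one kernel-verified Lean document; each statement's English description precedes it below -/
import Mathlib

section
/- If a is a right n-Engel element of a group G (i.e., [a,ₙ g] = 1 for all g ∈ G), then a⁻¹ is a left (n+1)-Engel element of G (i.e., [g,ₙ₊₁ a⁻¹] = 1 for all g ∈ G). -/
/-- Iterated Engel commutator: `engel x y n = [x, y, y, ..., y]` (n copies of y),
with the convention `[x, y] = x⁻¹ * y⁻¹ * x * y`. -/
def engel {G : Type*} [Group G] (x y : G) : ℕ → G
  | 0 => x
  | n + 1 => (engel x y n)⁻¹ * y⁻¹ * engel x y n * y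

lemma engel_shift {G : Type*} [Group G] (x y : G) (k m : ℕ) :
    engel x y (k + m) = engel (engel x y k) y m := by
  induction m with
  | zero => rfl
  | succ m ih => show engel x y ((k + m) + 1) = _; simp [engel, ih]

lemma engel_conj {G : Type*} [Group G] (c x y : G) (k : ℕ) :
    engel (c * x * c⁻¹) (c * y * c⁻¹) k = c * engel x y k * c⁻¹ := by
  induction k with
  | zero => rfl
  | succ k ih => simp only [engel, ih]; group

lemma engel_conj_a {G : Type*} [Group G] (a x : G) (k : ℕ) :
    engel (a * x * a⁻¹) a⁻¹ k = a * engel x a⁻¹ k * a⁻¹ := by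
  have := engel_conj a x a⁻¹ k
  simpa using this

/-- If `a` is a right `n`-Engel element of `G`, then `a⁻¹` is a left `(n+1)`-Engel
element of `G`. -/
theorem right_nEngel_inv_left_succ_nEngel {G : Type*} [Group G] (a : G) (n : ℕ) (hn : 1 ≤ n)
    (h : ∀ g : G, engel a g n = 1) :
    ∀ g : G, engel g a⁻¹ (n + 1) = 1 := by
  intro g
  have hsplit : n + 1 = 2 + (n - 1) := by omega
  rw [hsplit, engel_shift]
  have e2 : engel g a⁻¹ 2 = a * engel (g⁻¹ * a * g) a⁻¹ 1 * a⁻¹ := by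
    show _ = a * _ * a⁻¹
    simp only [engel]
    group
  rw [e2, engel_conj_a]
  have key : engel (g⁻¹ * a * g) a⁻¹ (1 + (n - 1)) = 1 := by
    have hn' : 1 + (n - 1) = n := by omega
    rw [hn']
    have := engel_conj g⁻¹ a (g * a⁻¹ * g⁻¹) n
    simp only [inv_inv] at this
    have h2 : g⁻¹ * (g * a⁻¹ * g⁻¹) * g = a⁻¹ := by group
    rw [h2] at this
    rw [this, h (g * a⁻¹ * g⁻¹)]
    group
  rw [engel_shift] at key
  rw [key]
  group
end

section
/- Let G be a group such that G/Z(G) is finite of order m. Then G is nilpotent-by-finite; moreover, if additionally every right Engel element of every finite group lies in a finite term of its upper central series, then the set of right Engel elements of G is a subgroup of G contained in Z_ω(G). -/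
lemma engel_map {G H : Type*} [Group G] [Group H] (φ : G →* H) (a g : G) :
    ∀ n, φ (engel a g n) = engel (φ a) (φ g) n
  | 0 => rfl
  | n + 1 => by simp [engel, engel_map φ a g n]

lemma engel_succ_eq {G : Type*} [Group G] (a g : G) :
    ∀ n, engel a g (n + 1) = engel (a⁻¹ * g⁻¹ * a * g) g n
  | 0 => by simp [engel]
  | n + 1 => by
    have h : engel a g (n + 1 + 1) =
        (engel a g (n + 1))⁻¹ * g⁻¹ * engel a g (n + 1) * g := rfl
    rw [h, engel_succ_eq a g n]
    rfl

lemma engel_eq_one_of_mem_ucs {G : Type*} [Group G] :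
    ∀ (k : ℕ) (a : G), a ∈ upperCentralSeries G k → ∀ g : G, engel a g k = 1
  | 0, a, ha, g => by
    change a ∈ Subgroup.upperCentralSeries G 0 at ha
    rw [upperCentralSeries_zero, Subgroup.mem_bot] at ha
    simpa [engel] using ha
  | k + 1, a, ha, g => by
    have ha' : a⁻¹ ∈ upperCentralSeries G (k + 1) := inv_mem ha
    change a⁻¹ ∈ Subgroup.upperCentralSeries G (k + 1) at ha'
    rw [mem_upperCentralSeries_succ_iff] at ha'
    have h := ha' g⁻¹
    simp only [commutatorElement_def, inv_inv] at h
    rw [engel_succ_eq]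
    exact engel_eq_one_of_mem_ucs k _ h g

/-- If `G/Z(G)` is finite of order `m`, then `G` is nilpotent-by-finite; moreover, if
every right Engel element of every finite group lies in a finite term of its upper
central series, then the right Engel elements of `G` form a subgroup contained in
`Z_ω(G)`. -/
theorem central_by_finite_engel {G : Type*} [Group G] (m : ℕ)
    (hfin : Finite (G ⧸ Subgroup.center G))
    (hm : Nat.card (G ⧸ Subgroup.center G) = m) :
    (∃ N : Subgroup G, N.Normal ∧ Group.IsNilpotent N ∧ Finite (G ⧸ N)) ∧
    ((∀ (H : Type) [Group H] [Finite H] (a : H),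
        (∀ g : H, ∃ n ≥ 1, engel a g n = 1) → ∃ k, a ∈ upperCentralSeries H k) →
      ∃ S : Subgroup G, (S : Set G) = {a : G | ∀ g : G, ∃ n ≥ 1, engel a g n = 1} ∧
        (S : Set G) ⊆ ⋃ k : ℕ, (upperCentralSeries G k : Set G)) := by
  constructor
  · exact ⟨Subgroup.center G, inferInstance, by open IsMulCommutative in infer_instance, hfin⟩
  · intro hyp
    obtain ⟨H, _, _, ⟨e⟩⟩ :=
      Finite.exists_type_univ_nonempty_mulEquiv.{_, 0} (G ⧸ Subgroup.center G)
    have hdir : Directed (· ≤ ·) (upperCentralSeries G) :=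
      (upperCentralSeries_mono G).directed_le
    have hcoe : ((⨆ k, upperCentralSeries G k : Subgroup G) : Set G) =
        ⋃ k : ℕ, (upperCentralSeries G k : Set G) := Subgroup.coe_iSup_of_directed hdir
    refine ⟨⨆ k, upperCentralSeries G k, ?_, by rw [hcoe]⟩
    rw [hcoe]
    ext a
    simp only [Set.mem_iUnion, SetLike.mem_coe, Set.mem_setOf_eq]
    constructor
    · rintro ⟨k, hk⟩ g
      exact ⟨k + 1, Nat.le_add_left 1 k,
        engel_eq_one_of_mem_ucs (k + 1) a (upperCentralSeries_mono G (Nat.le_succ k) hk) g⟩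
    · intro ha
      set φ : G →* H := e.toMonoidHom.comp (QuotientGroup.mk' (Subgroup.center G)) with hφ
      have hsurj : Function.Surjective φ :=
        e.surjective.comp (QuotientGroup.mk'_surjective _)
      have hEng : ∀ h : H, ∃ n ≥ 1, engel (φ a) h n = 1 := by
        intro h
        obtain ⟨g, rfl⟩ := hsurj h
        obtain ⟨n, hn1, hn⟩ := ha g
        exact ⟨n, hn1, by rw [← engel_map φ a g n, hn, map_one]⟩
      obtain ⟨k, hk⟩ := hyp H (φ a) hEng
      refine ⟨k + 1, ?_⟩
      have h1 : (QuotientGroup.mk' (Subgroup.center G)) a ∈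
          (upperCentralSeries H k).comap (e : (G ⧸ Subgroup.center G) →* H) := hk
      change (QuotientGroup.mk' (Subgroup.center G)) a ∈
          (Subgroup.upperCentralSeries H k).comap (e : (G ⧸ Subgroup.center G) →* H) at h1
      rw [comap_upperCentralSeries e k] at h1
      have h2 : a ∈ (upperCentralSeries (G ⧸ Subgroup.center G) k).comap
          (QuotientGroup.mk' (Subgroup.center G)) := h1
      change a ∈ (Subgroup.upperCentralSeries (G ⧸ Subgroup.center G) k).comap
          (QuotientGroup.mk' (Subgroup.center G)) at h2
      rwa [comap_upperCentralSeries_quotient_center] at h2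
end
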